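/- In the fractional linear setting, the key expectation identity holds: E[H_{i,n}(exp(-β e^{S_i - S_n}))] = E[ (ā_j / ((1 - exp(-β/ā_j))^{-1} + B̄_{1,j+1})) · (b̄_{j+1}/b̄_j) · (1/b̄_{n+1}) ], where j = n - i, the bar quantities are those of the reflected walk S̄_k = -S_k (i.e. ā_k = e^{S_k}, b̄_m = ∑_{k=0}^{m-1} e^{S_k}, B̄_{1,m} = ∑_{k=1}^{m-1} e^{S_k}), using duality of random walks. -/

import Mathlib

open MeasureTheory ProbabilityTheory Filter

/-- The fractional linear (geometric) probability generating function with mean `exp x`. -/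
noncomputable def geomPGF (x s : ℝ) : ℝ := (1 + Real.exp x * (1 - s))⁻¹

/-- The associated random walk: `walk X k = log m_1 + ... + log m_k` where `X j = log m_j`. -/
noncomputable def walk (X : ℕ → ℝ) (k : ℕ) : ℝ := ∑ j ∈ Finset.range k, X (j + 1)

/-- Forward composition `F_{i,n}(s) = F_{i+1}(F_{i+2}(... F_n(s) ...))`, with `F_{n,n}(s) = s`,
where `F_k` is the fractional linear pgf with mean `m_k = exp (X k)`. -/
noncomputable def Fcomp (X : ℕ → ℝ) (i n : ℕ) (s : ℝ) : ℝ :=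
  (List.range (n - i)).foldr (fun k t => geomPGF (X (i + k + 1)) t) s

/-- `H_{i,n}(s) := (1 - F_{i,n}(s)) ∏_{j ≠ i, 0 ≤ j ≤ n-1} F_{j,n}(0)`: given the environment,
this is `E[ (1 - s^{Z_{i,n}}) 1_{A_i(n)} | environment ]` for the BPIRE with geometric offspring
laws; in particular `E[H_{i,n}(0) | environment] = P(A_i(n) | environment)`, where `A_i(n)` is
the event that only the clan of the generation-`i` immigrant survives at time `n`. -/
noncomputable def Hfun (X : ℕ → ℝ) (i n : ℕ) (s : ℝ) : ℝ :=
  (1 - Fcomp X i n s) * ∏ j ∈ (Finset.range n).erase i, Fcomp X j n 0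

/-- The associated random walk of the random environment. -/
noncomputable def Sw {Ω : Type*} (X : ℕ → Ω → ℝ) (n : ℕ) (ω : Ω) : ℝ :=
  walk (fun k => X k ω) n

/-- `P(A_i(n)) = E[H_{i,n}(0)]`: the probability that at time `n` only the clan of the
generation-`i` immigrant survives in the BPIRE with geometric offspring distributions. -/
noncomputable def probOnlyClan {Ω : Type*} [MeasurableSpace Ω] (μ : Measure Ω)
    (X : ℕ → Ω → ℝ) (i n : ℕ) : ℝ :=
  ∫ ω, Hfun (fun k => X k ω) i n 0 ∂μ

/-- `Y` is lattice: its distribution is concentrated on an arithmetic progression. -/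
def IsLattice {Ω : Type*} [MeasurableSpace Ω] (μ : Measure Ω) (Y : Ω → ℝ) : Prop :=
  ∃ a h : ℝ, 0 < h ∧ ∀ᵐ ω ∂μ, ∃ k : ℤ, Y ω = a + k * h

lemma walk_succ (x : ℕ → ℝ) (k : ℕ) : walk x (k + 1) = walk x k + x (k + 1) := by
  simp [walk, Finset.sum_range_succ]

lemma Fcomp_rec (x : ℕ → ℝ) {i n : ℕ} (h : i < n) (s : ℝ) :
    Fcomp x i n s = geomPGF (x (i + 1)) (Fcomp x (i + 1) n s) := by
  unfold Fcomp
  have h1 : n - i = (n - (i + 1)) + 1 := by omega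
  rw [h1, List.range_succ_eq_map, List.foldr_cons, List.foldr_map]
  have hf : (fun (k : ℕ) (t : ℝ) => geomPGF (x (i + (k + 1) + 1)) t)
      = (fun k t => geomPGF (x (i + 1 + k + 1)) t) := by
    funext k t; congr 3; omega
  simp only [Nat.succ_eq_add_one, Nat.add_zero, hf]

lemma Fcomp_closed (x : ℕ → ℝ) {s : ℝ} (hs : s < 1) :
    ∀ (d i : ℕ), Fcomp x i (i + d) s =
      1 - Real.exp (-walk x i) /
        (Real.exp (-walk x (i + d)) / (1 - s) +
          ∑ k ∈ Finset.Ico i (i + d), Real.exp (-walk x k)) := by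
  have h1s : (0:ℝ) < 1 - s := by linarith
  intro d
  induction d with
  | zero =>
    intro i
    simp only [Nat.add_zero, Fcomp, Nat.sub_self, List.range_zero, List.foldr_nil,
      Finset.Ico_self, Finset.sum_empty, add_zero]
    rw [div_div_eq_mul_div, mul_comm, mul_div_assoc, div_self (ne_of_gt (Real.exp_pos _))]
    ring
  | succ d ih =>
    intro i
    have hrec := Fcomp_rec x (show i < i + (d+1) by omega) s
    have h2 : i + (d + 1) = (i + 1) + d := by omega
    rw [h2] at hrec ⊢
    rw [hrec, ih (i+1)]
    have hA : ∀ k, (0:ℝ) < Real.exp (-walk x k) := fun k => Real.exp_pos _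
    have hsum : (0:ℝ) ≤ ∑ k ∈ Finset.Ico (i+1) (i+1+d), Real.exp (-walk x k) :=
      Finset.sum_nonneg fun k _ => (hA k).le
    set D := Real.exp (-walk x (i+1+d)) / (1 - s) +
      ∑ k ∈ Finset.Ico (i+1) (i+1+d), Real.exp (-walk x k) with hD
    have hDpos : 0 < D := by positivity
    have hIco : ∑ k ∈ Finset.Ico i (i+1+d), Real.exp (-walk x k)
        = Real.exp (-walk x i) + ∑ k ∈ Finset.Ico (i+1) (i+1+d), Real.exp (-walk x k) :=
      Finset.sum_eq_sum_Ico_succ_bot (by omega) _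
    have hexp : Real.exp (x (i+1)) * Real.exp (-walk x (i+1)) = Real.exp (-walk x i) := by
      rw [← Real.exp_add, walk_succ]; ring_nf
    unfold geomPGF
    have hgoal : Real.exp (-walk x (i+1+d)) / (1 - s)
        + ∑ k ∈ Finset.Ico i (i+1+d), Real.exp (-walk x k)
        = D + Real.exp (-walk x i) := by rw [hIco, hD]; ring
    rw [hgoal]
    have hDi : 0 < D + Real.exp (-walk x i) := by positivity
    rw [← hexp]
    field_simp
    rw [show D - (D - Real.exp (-walk x (i + 1))) = Real.exp (-walk x (i + 1)) by ring, hexp,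
      mul_div_assoc, div_self (ne_of_gt hDi)]
    ring

lemma prod_telescope (c : ℕ → ℝ) : ∀ n, (∀ j, j ≤ n → c j ≠ 0) →
    ∏ m ∈ Finset.range n, (c (m+1) / c m) = c n / c 0 := by
  intro n
  induction n with
  | zero => intro h; simp [div_self (h 0 (le_refl 0))]
  | succ n ih =>
    intro h
    rw [Finset.prod_range_succ, ih (fun j hj => h j (by omega))]
    rw [div_mul_div_comm, mul_comm, mul_div_mul_right _ _ (h n (by omega))]

lemma Fcomp_zero_eq (x : ℕ → ℝ) {m n : ℕ} (hmn : m ≤ n) :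
    Fcomp x m n 0 = (∑ k ∈ Finset.Icc (m+1) n, Real.exp (-walk x k))
      / (∑ k ∈ Finset.Icc m n, Real.exp (-walk x k)) := by
  have h0 : (0:ℝ) < 1 := one_pos
  have := Fcomp_closed x h0 (n - m) m
  rw [show m + (n - m) = n by omega] at this
  rw [this]
  have hIccIco : ∀ a : ℕ, a ≤ n + 1 → Finset.Icc a n = Finset.Ico a (n+1) := by
    intro a _; rw [Finset.Ico_add_one_right_eq_Icc]
  have h1 : ∑ k ∈ Finset.Icc m n, Real.exp (-walk x k)
      = Real.exp (-walk x n) / (1 - 0) + ∑ k ∈ Finset.Ico m n, Real.exp (-walk x k) := by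
    rw [hIccIco m (by omega), Finset.sum_Ico_succ_top hmn]
    ring
  rw [← h1]
  have h2 : ∑ k ∈ Finset.Icc m n, Real.exp (-walk x k)
      = Real.exp (-walk x m) + ∑ k ∈ Finset.Icc (m+1) n, Real.exp (-walk x k) := by
    rw [hIccIco m (by omega), hIccIco (m+1) (by omega),
      Finset.sum_eq_sum_Ico_succ_bot (by omega)]
  have hpos : (0:ℝ) < ∑ k ∈ Finset.Icc m n, Real.exp (-walk x k) :=
    Finset.sum_pos (fun k _ => Real.exp_pos _) ⟨m, by simp [hmn]⟩
  field_simp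
  linarith [h2]

lemma Hfun_closed (x : ℕ → ℝ) {i n : ℕ} (hin : i < n) {s : ℝ} (hs : s < 1) :
    Hfun x i n s =
      (Real.exp (-walk x i) /
        (Real.exp (-walk x n) / (1 - s) + ∑ k ∈ Finset.Icc i (n-1), Real.exp (-walk x k))) *
      ((Real.exp (-walk x n) * ∑ k ∈ Finset.Icc i n, Real.exp (-walk x k)) /
        ((∑ k ∈ Finset.Icc 0 n, Real.exp (-walk x k)) *
         (∑ k ∈ Finset.Icc (i+1) n, Real.exp (-walk x k)))) := by
  set c : ℕ → ℝ := fun j => ∑ k ∈ Finset.Icc j n, Real.exp (-walk x k) with hc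
  have hcpos : ∀ j, j ≤ n → 0 < c j :=
    fun j hj => Finset.sum_pos (fun k _ => Real.exp_pos _) ⟨j, by simp [hj]⟩
  have hcn : c n = Real.exp (-walk x n) := by simp [hc]
  -- the product part
  have hprod : ∀ m ∈ Finset.range n, Fcomp x m n 0 = c (m+1) / c m := by
    intro m hm
    exact Fcomp_zero_eq x (by simp at hm; omega)
  have hfull : ∏ m ∈ Finset.range n, Fcomp x m n 0 = c n / c 0 := by
    rw [Finset.prod_congr rfl hprod]
    exact prod_telescope c n (fun j hj => ne_of_gt (hcpos j hj))
  have hi_mem : i ∈ Finset.range n := Finset.mem_range.mpr hin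
  have herase : ∏ m ∈ (Finset.range n).erase i, Fcomp x m n 0
      = (c n / c 0) * (c i / c (i+1)) := by
    have key : Fcomp x i n 0 * ∏ m ∈ (Finset.range n).erase i, Fcomp x m n 0
        = ∏ m ∈ Finset.range n, Fcomp x m n 0 :=
      Finset.mul_prod_erase (Finset.range n) (fun m => Fcomp x m n 0) hi_mem
    rw [hprod i hi_mem, hfull] at key
    have h1 := ne_of_gt (hcpos i (by omega))
    have h2 := ne_of_gt (hcpos (i+1) (by omega))
    have h0 := ne_of_gt (hcpos 0 (by omega))
    field_simp at key ⊢
    linear_combination key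
  -- the 1 - F part
  have hF := Fcomp_closed x hs (n - i) i
  rw [show i + (n - i) = n by omega] at hF
  have hIco : Finset.Ico i n = Finset.Icc i (n-1) := by
    rw [← Finset.Ico_add_one_right_eq_Icc]
    congr 1
    omega
  unfold Hfun
  rw [hF, herase, hcn, hIco]
  ring

lemma sum_reflect (f : ℕ → ℝ) {a b n : ℕ} (hab : a ≤ b) (hbn : b ≤ n) :
    ∑ k ∈ Finset.Icc a b, f (n - k) = ∑ k ∈ Finset.Icc (n - b) (n - a), f k := by
  refine Finset.sum_nbij' (fun k => n - k) (fun k => n - k) ?_ ?_ ?_ ?_ ?_ <;>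
    (intro u hu; simp only [Finset.mem_Icc] at hu ⊢) <;> omega

lemma walk_rev (x : ℕ → ℝ) {n m : ℕ} (hm : m ≤ n) :
    walk (fun k => x (n + 1 - k)) m = walk x n - walk x (n - m) := by
  have h1 : walk x n - walk x (n - m) = ∑ l ∈ Finset.Ico (n - m) n, x (l + 1) := by
    rw [Finset.sum_Ico_eq_sub _ (by omega : n - m ≤ n)]
    simp [walk]
  rw [h1]
  unfold walk
  refine Finset.sum_nbij' (fun k => n - 1 - k) (fun k => n - 1 - k) ?_ ?_ ?_ ?_ ?_ <;>
    (intro u hu; simp only [Finset.mem_range, Finset.mem_Ico] at hu ⊢)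
  · omega
  · omega
  · omega
  · omega
  · congr 1; omega

lemma walk_congr {x y : ℕ → ℝ} {n : ℕ} (h : ∀ k, 1 ≤ k → k ≤ n → x k = y k)
    {m : ℕ} (hm : m ≤ n) : walk x m = walk y m :=
  Finset.sum_congr rfl fun l hl =>
    h _ (by omega) (by have := Finset.mem_range.mp hl; omega)

noncomputable def Rexpr (i n : ℕ) (β : ℝ) (x : ℕ → ℝ) : ℝ :=
  (Real.exp (walk x (n - i)) /
      ((1 - Real.exp (-β / Real.exp (walk x (n - i))))⁻¹ +
        ∑ k ∈ Finset.Icc 1 (n - i), Real.exp (walk x k))) *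
    ((∑ k ∈ Finset.range (n - i + 1), Real.exp (walk x k)) /
      (∑ k ∈ Finset.range (n - i), Real.exp (walk x k))) *
    (∑ k ∈ Finset.range (n + 1), Real.exp (walk x k))⁻¹

lemma Rexpr_congr {x y : ℕ → ℝ} {i n : ℕ} (β : ℝ)
    (h : ∀ k, 1 ≤ k → k ≤ n → x k = y k) :
    Rexpr i n β x = Rexpr i n β y := by
  have hw : ∀ m, m ≤ n → walk x m = walk y m := fun m hm => walk_congr h hm
  unfold Rexpr
  rw [hw (n - i) (by omega)]
  congr 1
  · congr 1
    · congr 2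
      exact Finset.sum_congr rfl fun k hk =>
        (by rw [hw k (by have := (Finset.mem_Icc.mp hk).2; omega)])
    · congr 1
      · exact Finset.sum_congr rfl fun k hk =>
          (by rw [hw k (by have := Finset.mem_range.mp hk; omega)])
      · exact Finset.sum_congr rfl fun k hk =>
          (by rw [hw k (by have := Finset.mem_range.mp hk; omega)])
  · congr 1
    exact Finset.sum_congr rfl fun k hk =>
      (by rw [hw k (by have := Finset.mem_range.mp hk; omega)])

lemma Rexpr_rev (x : ℕ → ℝ) {i n : ℕ} (hin : i < n) {β : ℝ} (hβ : 0 < β) :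
    Rexpr i n β (fun k => x (n + 1 - k)) =
      Hfun x i n (Real.exp (-β * Real.exp (walk x i - walk x n))) := by
  set s : ℝ := Real.exp (-β * Real.exp (walk x i - walk x n)) with hsdef
  have hs : s < 1 := by
    rw [hsdef, Real.exp_lt_one_iff]
    have := Real.exp_pos (walk x i - walk x n)
    nlinarith
  have h1s : (0:ℝ) < 1 - s := by linarith
  rw [Hfun_closed x hin hs]
  set y : ℕ → ℝ := fun k => x (n + 1 - k) with hy
  have hw : ∀ m, m ≤ n → walk y m = walk x n - walk x (n - m) :=
    fun m hm => walk_rev x hm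
  set T : ℝ := Real.exp (walk x n) with hT
  set g : ℕ → ℝ := fun m => Real.exp (-walk x m) with hg
  have hTg : ∀ m, Real.exp (walk x n - walk x m) = T * g m := by
    intro m
    rw [hT, hg, ← Real.exp_add, sub_eq_add_neg]
  have e1 : Real.exp (walk y (n - i)) = T * g i := by
    rw [hw (n - i) (by omega), show n - (n - i) = i by omega, hTg]
  have e2 : (1 - Real.exp (-β / Real.exp (walk y (n - i))))⁻¹ = (1 - s)⁻¹ := by
    rw [hw (n - i) (by omega), show n - (n - i) = i by omega, hsdef]
    congr 3
    rw [div_eq_mul_inv, ← Real.exp_neg, neg_sub]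
  have hrefl : ∀ a b : ℕ, a ≤ b → b ≤ n →
      ∑ k ∈ Finset.Icc a b, Real.exp (walk y k)
        = T * ∑ k ∈ Finset.Icc (n - b) (n - a), g k := by
    intro a b hab hbn
    have hcongr : ∑ k ∈ Finset.Icc a b, Real.exp (walk y k)
        = ∑ k ∈ Finset.Icc a b, T * g (n - k) := by
      refine Finset.sum_congr rfl fun k hk => ?_
      have hk' := Finset.mem_Icc.mp hk
      rw [hw k (by omega), hTg]
    rw [hcongr, ← Finset.mul_sum, sum_reflect g hab hbn]
  have e3 : ∑ k ∈ Finset.Icc 1 (n - i), Real.exp (walk y k)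
      = T * ∑ k ∈ Finset.Icc i (n - 1), g k := by
    rw [hrefl 1 (n - i) (by omega) (by omega), show n - (n - i) = i by omega,
      show n - 1 = n - 1 by rfl]
  have hIccRange : ∀ m : ℕ, Finset.range (m + 1) = Finset.Icc 0 m := by
    intro m
    rw [Finset.range_eq_Ico, Finset.Ico_add_one_right_eq_Icc]
  have e4 : ∑ k ∈ Finset.range (n - i + 1), Real.exp (walk y k)
      = T * ∑ k ∈ Finset.Icc i n, g k := by
    rw [hIccRange, hrefl 0 (n - i) (by omega) (by omega),
      show n - (n - i) = i by omega, Nat.sub_zero]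
  have e5 : ∑ k ∈ Finset.range (n - i), Real.exp (walk y k)
      = T * ∑ k ∈ Finset.Icc (i + 1) n, g k := by
    rw [show n - i = (n - i - 1) + 1 by omega, hIccRange,
      hrefl 0 (n - i - 1) (by omega) (by omega),
      show n - (n - i - 1) = i + 1 by omega, Nat.sub_zero]
  have e6 : ∑ k ∈ Finset.range (n + 1), Real.exp (walk y k)
      = T * ∑ k ∈ Finset.Icc 0 n, g k := by
    rw [hIccRange, hrefl 0 n (by omega) (by omega), Nat.sub_self, Nat.sub_zero]
  unfold Rexpr
  rw [e2, e1, e3, e4, e5, e6]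
  have hgn : Real.exp (-walk x n) = T⁻¹ := by rw [hT, Real.exp_neg]
  rw [show (Real.exp (-walk x n) / (1 - s) + ∑ k ∈ Finset.Icc i (n-1), Real.exp (-walk x k))
      = T⁻¹ / (1 - s) + ∑ k ∈ Finset.Icc i (n-1), g k from by rw [hgn, hg]]
  rw [show (Real.exp (-walk x n) * ∑ k ∈ Finset.Icc i n, Real.exp (-walk x k))
      = T⁻¹ * ∑ k ∈ Finset.Icc i n, g k from by rw [hgn, hg]]
  rw [show ((∑ k ∈ Finset.Icc 0 n, Real.exp (-walk x k)) *
        (∑ k ∈ Finset.Icc (i+1) n, Real.exp (-walk x k)))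
      = (∑ k ∈ Finset.Icc 0 n, g k) * (∑ k ∈ Finset.Icc (i+1) n, g k) from by rw [hg]]
  have hgpos : ∀ m, 0 < g m := fun m => Real.exp_pos _
  have hTpos : 0 < T := Real.exp_pos _
  have hP1 : 0 ≤ ∑ k ∈ Finset.Icc i (n-1), g k := Finset.sum_nonneg fun k _ => (hgpos k).le
  have hP2 : 0 < ∑ k ∈ Finset.Icc i n, g k :=
    Finset.sum_pos (fun k _ => hgpos k) ⟨i, by simp; omega⟩
  have hP3 : 0 < ∑ k ∈ Finset.Icc (i+1) n, g k :=
    Finset.sum_pos (fun k _ => hgpos k) ⟨i+1, by simp; omega⟩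
  have hP4 : 0 < ∑ k ∈ Finset.Icc 0 n, g k :=
    Finset.sum_pos (fun k _ => hgpos k) ⟨0, by simp⟩
  have hd1 : 0 < (1 - s)⁻¹ + T * ∑ k ∈ Finset.Icc i (n-1), g k := by positivity
  have hd2 : 0 < T⁻¹ / (1 - s) + ∑ k ∈ Finset.Icc i (n-1), g k := by positivity
  field_simp
  ring

noncomputable def xOf (n : ℕ) (v : Fin n → ℝ) : ℕ → ℝ :=
  fun k => if h : k - 1 < n then v ⟨k - 1, h⟩ else 0

lemma xOf_meas_walk (n m : ℕ) : Measurable (fun v : Fin n → ℝ => walk (xOf n v) m) := by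
  unfold walk
  refine Finset.measurable_sum _ fun l _ => ?_
  unfold xOf
  by_cases h : l + 1 - 1 < n
  · simp only [dif_pos h]
    exact measurable_pi_apply _
  · simp only [dif_neg h]
    exact measurable_const

lemma Rvec_meas (i n : ℕ) (β : ℝ) : Measurable (fun v : Fin n → ℝ => Rexpr i n β (xOf n v)) := by
  unfold Rexpr
  have hw : ∀ m, Measurable (fun v : Fin n → ℝ => walk (xOf n v) m) := xOf_meas_walk n
  have he : ∀ m, Measurable (fun v : Fin n → ℝ => Real.exp (walk (xOf n v) m)) :=
    fun m => Real.measurable_exp.comp (hw m)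
  refine Measurable.mul (Measurable.mul ?_ ?_) ?_
  · refine Measurable.div (he _) (Measurable.add ?_ ?_)
    · refine Measurable.inv (Measurable.sub measurable_const ?_)
      exact Real.measurable_exp.comp (Measurable.div measurable_const (he _))
    · exact Finset.measurable_sum _ fun k _ => he k
  · exact Measurable.div (Finset.measurable_sum _ fun k _ => he k)
      (Finset.measurable_sum _ fun k _ => he k)
  · exact Measurable.inv (Finset.measurable_sum _ fun k _ => he k)

section prob
variable {Ω : Type*} [MeasurableSpace Ω] (μ : Measure Ω) [IsProbabilityMeasure μ]

lemma map_VW_eq (X : ℕ → Ω → ℝ) (hmeas : ∀ k, Measurable (X k))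
    (hindep : iIndepFun X μ)
    (hident : ∀ k, IdentDistrib (X k) (X 0) μ μ) (n : ℕ) (hn : 0 < n) :
    μ.map (fun ω (k : Fin n) => X ((k : ℕ) + 1) ω)
      = μ.map (fun ω (k : Fin n) => X (n - (k : ℕ)) ω) := by
  set V : Ω → (Fin n → ℝ) := fun ω k => X ((k : ℕ) + 1) ω with hVdef
  set W : Ω → (Fin n → ℝ) := fun ω k => X (n - (k : ℕ)) ω with hWdef
  have hV : Measurable V := measurable_pi_lambda _ fun k => hmeas _
  have hW : Measurable W := measurable_pi_lambda _ fun k => hmeas _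
  haveI := Measure.isProbabilityMeasure_map (μ := μ) hV.aemeasurable
  haveI := Measure.isProbabilityMeasure_map (μ := μ) hW.aemeasurable
  refine ext_of_generate_finite _ generateFrom_pi.symm isPiSystem_pi ?_ ?_
  swap
  · simp [Measure.map_apply hV MeasurableSet.univ, Measure.map_apply hW MeasurableSet.univ]
  rintro _ ⟨t, ht, rfl⟩
  simp only [Set.mem_pi, Set.mem_univ, forall_true_left, Set.mem_setOf_eq] at ht
  have htm : ∀ k, MeasurableSet (t k) := ht
  have hbox : MeasurableSet (Set.pi Set.univ t) := MeasurableSet.univ_pi htm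
  rw [Measure.map_apply hV hbox, Measure.map_apply hW hbox]
  -- general claim for injective σ with σ k ∈ [1, n]
  have key : ∀ σ : Fin n → ℕ, Function.Injective σ →
      (∀ k, 1 ≤ σ k ∧ σ k ≤ n) →
      (∀ (τ : ℕ → Fin n), (∀ k, τ (σ k) = k) →
      μ ((fun ω (k : Fin n) => X (σ k) ω) ⁻¹' Set.pi Set.univ t)
        = ∏ k : Fin n, (μ.map (X 0)) (t k)) := by
    intro σ hσinj hσrange τ hτ
    set sets : ℕ → Set ℝ := fun m => if m ∈ Finset.image σ Finset.univ then t (τ m) else Set.univ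
      with hsets
    have hsets_meas : ∀ m, m ∈ Finset.image σ Finset.univ → MeasurableSet (sets m) := by
      intro m hm
      simp only [hsets, if_pos hm]
      exact htm _
    have hpre : (fun ω (k : Fin n) => X (σ k) ω) ⁻¹' Set.pi Set.univ t
        = ⋂ m ∈ Finset.image σ Finset.univ, X m ⁻¹' sets m := by
      ext ω
      simp only [Set.mem_preimage, Set.mem_pi, Set.mem_univ, forall_true_left,
        Set.mem_iInter, Finset.mem_image, Finset.mem_univ, true_and]
      constructor
      · rintro h m ⟨k, rfl⟩
        simp only [hsets, Finset.mem_image, Finset.mem_univ, true_and]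
        rw [if_pos ⟨k, rfl⟩, hτ k]
        exact h k
      · intro h k
        have := h (σ k) ⟨k, rfl⟩
        simp only [hsets, Finset.mem_image, Finset.mem_univ, true_and] at this
        rw [if_pos ⟨k, rfl⟩, hτ k] at this
        exact this
    rw [hpre, hindep.measure_inter_preimage_eq_mul _ hsets_meas,
      Finset.prod_image (fun a _ b _ h => hσinj h)]
    refine Finset.prod_congr rfl fun k _ => ?_
    have hmem : σ k ∈ Finset.image σ Finset.univ :=
      Finset.mem_image.mpr ⟨k, Finset.mem_univ k, rfl⟩
    simp only [hsets, if_pos hmem, hτ k]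
    rw [← Measure.map_apply (hmeas _) (htm _), (hident (σ k)).map_eq]
  have h1 := key (fun k => (k : ℕ) + 1) (fun a b h => by
      have h' : (a : ℕ) + 1 = (b : ℕ) + 1 := h
      exact Fin.ext (by omega))
    (fun k => ⟨by show 1 ≤ (k : ℕ) + 1; omega,
      by show (k : ℕ) + 1 ≤ n; have := k.2; omega⟩)
    (fun m => if h : m - 1 < n then ⟨m - 1, h⟩ else ⟨0, hn⟩)
    (fun k => by simp)
  have h2 := key (fun k => n - (k : ℕ)) (fun a b h => by
      have ha := a.2; have hb := b.2
      have h' : n - (a : ℕ) = n - (b : ℕ) := h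
      exact Fin.ext (by omega))
    (fun k => ⟨by show 1 ≤ n - (k : ℕ); have := k.2; omega,
      by show n - (k : ℕ) ≤ n; omega⟩)
    (fun m => if h : n - m < n then ⟨n - m, h⟩ else ⟨0, hn⟩)
    (fun k => by
      have hk := k.2
      have h : n - (n - (k : ℕ)) < n := by omega
      simp only [dif_pos h]
      exact Fin.ext (by simp only [Fin.val_mk]; omega))
  rw [h1, h2]

end prob

/-- display (NewInterpr)/(intro_Nu): by duality of the i.i.d. random walk,
with `j = n - i`, `ā_k = e^{S_k}`, `b̄_m = ∑_{k=0}^{m-1} e^{S_k}`, `B̄_{1,m} = ∑_{k=1}^{m-1} e^{S_k}`,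
`E[H_{i,n}(exp(-β e^{S_i - S_n}))]
  = E[ (ā_j / ((1 - exp(-β/ā_j))⁻¹ + B̄_{1,j+1})) · (b̄_{j+1}/b̄_j) · (1/b̄_{n+1}) ]`. -/
theorem H_expectation_duality {Ω : Type*} [MeasurableSpace Ω]
    (μ : Measure Ω) [IsProbabilityMeasure μ] (X : ℕ → Ω → ℝ) (hmeas : ∀ k, Measurable (X k))
    (hindep : iIndepFun X μ)
    (hident : ∀ k, IdentDistrib (X k) (X 0) μ μ)
    (i n : ℕ) (hin : i < n) (β : ℝ) (hβ : 0 < β) :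
    ∫ ω, Hfun (fun k => X k ω) i n
        (Real.exp (-β * Real.exp (Sw X i ω - Sw X n ω))) ∂μ =
      ∫ ω,
        (Real.exp (Sw X (n - i) ω) /
            ((1 - Real.exp (-β / Real.exp (Sw X (n - i) ω)))⁻¹ +
              ∑ k ∈ Finset.Icc 1 (n - i), Real.exp (Sw X k ω))) *
          ((∑ k ∈ Finset.range (n - i + 1), Real.exp (Sw X k ω)) /
            (∑ k ∈ Finset.range (n - i), Real.exp (Sw X k ω))) *
          (∑ k ∈ Finset.range (n + 1), Real.exp (Sw X k ω))⁻¹ ∂μ := by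
  have hn : 0 < n := by omega
  set V : Ω → (Fin n → ℝ) := fun ω (k : Fin n) => X ((k : ℕ) + 1) ω with hVdef
  set W : Ω → (Fin n → ℝ) := fun ω (k : Fin n) => X (n - (k : ℕ)) ω with hWdef
  have hV : Measurable V := measurable_pi_lambda _ fun k => hmeas _
  have hW : Measurable W := measurable_pi_lambda _ fun k => hmeas _
  have hmap : μ.map V = μ.map W := map_VW_eq μ X hmeas hindep hident n hn
  have hRmeas : Measurable (fun v : Fin n → ℝ => Rexpr i n β (xOf n v)) := Rvec_meas i n β
  have hLW : ∀ ω, Hfun (fun k => X k ω) i n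
      (Real.exp (-β * Real.exp (Sw X i ω - Sw X n ω)))
      = Rexpr i n β (xOf n (W ω)) := by
    intro ω
    have h1 : Sw X i ω = walk (fun k => X k ω) i := rfl
    have h2 : Sw X n ω = walk (fun k => X k ω) n := rfl
    rw [h1, h2, ← Rexpr_rev (fun k => X k ω) hin hβ]
    refine Rexpr_congr β ?_
    intro k hk1 hkn
    have hlt : k - 1 < n := by omega
    show X (n + 1 - k) ω = if h : k - 1 < n then W ω ⟨k - 1, h⟩ else 0
    rw [dif_pos hlt]
    show X (n + 1 - k) ω = X (n - (k - 1)) ω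
    congr 1
    omega
  have hRV : ∀ ω, Rexpr i n β (xOf n (V ω)) = Rexpr i n β (fun k => X k ω) := by
    intro ω
    refine Rexpr_congr β ?_
    intro k hk1 hkn
    have hlt : k - 1 < n := by omega
    show (if h : k - 1 < n then V ω ⟨k - 1, h⟩ else 0) = X k ω
    rw [dif_pos hlt]
    show X (k - 1 + 1) ω = X k ω
    congr 1
    omega
  have e1 : ∫ ω, Hfun (fun k => X k ω) i n
        (Real.exp (-β * Real.exp (Sw X i ω - Sw X n ω))) ∂μ
      = ∫ ω, Rexpr i n β (xOf n (W ω)) ∂μ :=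
    integral_congr_ae (Filter.Eventually.of_forall hLW)
  have e2 : ∫ ω, Rexpr i n β (xOf n (W ω)) ∂μ
      = ∫ ω, Rexpr i n β (xOf n (V ω)) ∂μ := by
    rw [← integral_map hW.aemeasurable hRmeas.aestronglyMeasurable,
      ← integral_map hV.aemeasurable hRmeas.aestronglyMeasurable, hmap]
  have e3 : ∫ ω, Rexpr i n β (xOf n (V ω)) ∂μ
      = ∫ ω, Rexpr i n β (fun k => X k ω) ∂μ :=
    integral_congr_ae (Filter.Eventually.of_forall fun ω => hRV ω)
  rw [e1, e2, e3]
  rfl
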